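/- If T : C → C satisfies Suzuki's condition (C), then for all x, y ∈ C, ‖x - Ty‖ ≤ 3‖Tx - x‖ + ‖x - y‖. -/
import Mathlib

theorem stmt_8 {X : Type*} [NormedAddCommGroup X] [NormedSpace ℝ X]
    (C : Set X) (hCne : C.Nonempty) (T : X → X) (hTC : ∀ x ∈ C, T x ∈ C)
    (hC : ∀ x ∈ C, ∀ y ∈ C, (1 / 2) * ‖x - T x‖ ≤ ‖x - y‖ → ‖T x - T y‖ ≤ ‖x - y‖) :
    ∀ x ∈ C, ∀ y ∈ C, ‖x - T y‖ ≤ 3 * ‖T x - x‖ + ‖x - y‖ := by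
  intro x hx y hy
  have hTxx : ‖T x - x‖ = ‖x - T x‖ := by rw [norm_sub_rev]
  by_cases h : (1 / 2) * ‖x - T x‖ ≤ ‖x - y‖
  · have h1 := hC x hx y hy h
    have h2 : ‖x - T y‖ ≤ ‖x - T x‖ + ‖T x - T y‖ := norm_sub_le_norm_sub_add_norm_sub _ _ _
    have : (0:ℝ) ≤ ‖x - T x‖ := norm_nonneg _
    rw [hTxx]; linarith
  · push_neg at h
    -- ‖Tx - T(Tx)‖ ≤ ‖x - Tx‖
    have hA : ‖T x - T (T x)‖ ≤ ‖x - T x‖ := by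
      apply hC x hx (T x) (hTC x hx)
      have : (0:ℝ) ≤ ‖x - T x‖ := norm_nonneg _
      linarith
    have hB : (1/2) * ‖x - T x‖ ≤ ‖T x - y‖ := by
      have : ‖x - T x‖ ≤ ‖x - y‖ + ‖y - T x‖ := norm_sub_le_norm_sub_add_norm_sub _ _ _
      have h3 : ‖y - T x‖ = ‖T x - y‖ := norm_sub_rev _ _
      linarith
    have hC2 : ‖T (T x) - T y‖ ≤ ‖T x - y‖ := by
      apply hC (T x) (hTC x hx) y hy
      linarith
    have ht1 : ‖x - T y‖ ≤ ‖x - T x‖ + ‖T x - T (T x)‖ + ‖T (T x) - T y‖ := by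
      calc ‖x - T y‖ ≤ ‖x - T (T x)‖ + ‖T (T x) - T y‖ := norm_sub_le_norm_sub_add_norm_sub _ _ _
        _ ≤ ‖x - T x‖ + ‖T x - T (T x)‖ + ‖T (T x) - T y‖ := by
            have := norm_sub_le_norm_sub_add_norm_sub x (T x) (T (T x)); linarith
    have ht2 : ‖T x - y‖ ≤ ‖T x - x‖ + ‖x - y‖ := norm_sub_le_norm_sub_add_norm_sub _ _ _
    rw [hTxx] at *
    linarith
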